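/- Let m be the Motzkin generating function satisfying m = 1 + z·m + z²·m², and let m̃ = 1 + z·m. Then m̃ = 1 + z·(1 - m̃ + m̃²), and h = z·m̃ is pseudo-involutory with B-function B_h = C, the Catalan generating function. -/

import Mathlib

open PowerSeries

/-- Composition `f ∘ g` of formal power series (meaningful when the constant
coefficient of `g` is zero). -/
noncomputable def comp (f g : PowerSeries ℚ) : PowerSeries ℚ :=
  PowerSeries.mk fun n =>
    ∑ i ∈ Finset.range (n + 1), (PowerSeries.coeff (R := ℚ) i f) * (PowerSeries.coeff (R := ℚ) n (g ^ i))

/-- A formal power series `f` is pseudo-involutory when its compositional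
inverse is `-f(-z)`. -/
def PseudoInvolutory (f : PowerSeries ℚ) : Prop :=
  comp f (-(comp f (-X))) = X ∧ comp (-(comp f (-X))) f = X

section CompLemmas

variable {g : PowerSeries ℚ}

lemma coeff_pow_eq_zero' (hg : constantCoeff (R := ℚ) g = 0) {n i : ℕ} (h : n < i) :
    PowerSeries.coeff (R := ℚ) n (g ^ i) = 0 := by
  have hd : (X : PowerSeries ℚ) ^ i ∣ g ^ i :=
    pow_dvd_pow_of_dvd (PowerSeries.X_dvd_iff.mpr hg) i
  exact (PowerSeries.X_pow_dvd_iff.mp hd) n h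

lemma coeff_aeval' (hg : constantCoeff (R := ℚ) g = 0) (P : Polynomial ℚ) (n : ℕ) :
    PowerSeries.coeff (R := ℚ) n (Polynomial.aeval g P) =
      ∑ i ∈ Finset.range (n + 1), P.coeff i * PowerSeries.coeff (R := ℚ) n (g ^ i) := by
  have hlt : P.natDegree < max (P.natDegree + 1) (n + 1) :=
    lt_of_lt_of_le (Nat.lt_succ_self _) (le_max_left _ _)
  rw [Polynomial.aeval_eq_sum_range' hlt g, map_sum]
  rw [← Finset.sum_subset (Finset.range_subset_range.mpr (le_max_right (P.natDegree + 1) (n + 1)))]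
  · exact Finset.sum_congr rfl fun i _ => by
      rw [PowerSeries.coeff_smul, smul_eq_mul]
  · intro i _ hni
    have : n < i := by
      by_contra hc
      exact hni (Finset.mem_range.mpr (Nat.lt_succ_of_le (le_of_not_gt hc)))
    rw [PowerSeries.coeff_smul, coeff_pow_eq_zero' hg this, smul_zero]

lemma coeff_comp' (hg : constantCoeff (R := ℚ) g = 0) (f : PowerSeries ℚ) {n p : ℕ} (hp : p ≤ n) :
    PowerSeries.coeff (R := ℚ) p (comp f g) =
      PowerSeries.coeff (R := ℚ) p (Polynomial.aeval g (trunc (n + 1) f)) := by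
  rw [comp, coeff_mk, coeff_aeval' hg]
  refine Finset.sum_congr rfl fun i hi => ?_
  have hi' : i < n + 1 :=
    lt_of_lt_of_le (Finset.mem_range.mp hi) (Nat.succ_le_succ hp)
  rw [coeff_trunc, if_pos hi']

lemma comp_add (g a b : PowerSeries ℚ) : comp (a + b) g = comp a g + comp b g := by
  ext n
  simp [comp, add_mul, Finset.sum_add_distrib]

lemma comp_neg (g a : PowerSeries ℚ) : comp (-a) g = -comp a g := by
  ext n
  simp [comp, Finset.sum_neg_distrib]

lemma comp_one (g : PowerSeries ℚ) : comp 1 g = 1 := by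
  ext n
  rw [comp, coeff_mk]
  simp only [PowerSeries.coeff_one, ite_mul, one_mul, zero_mul]
  rw [Finset.sum_ite_eq' (Finset.range (n + 1)) 0
    (fun i => PowerSeries.coeff (R := ℚ) n (g ^ i))]
  simp [PowerSeries.coeff_one]

lemma comp_X (hg : constantCoeff (R := ℚ) g = 0) : comp X g = g := by
  ext n
  rw [comp, coeff_mk]
  simp only [PowerSeries.coeff_X, ite_mul, one_mul, zero_mul]
  rw [Finset.sum_ite_eq' (Finset.range (n + 1)) 1
    (fun i => PowerSeries.coeff (R := ℚ) n (g ^ i))]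
  by_cases h1 : (1 : ℕ) ∈ Finset.range (n + 1)
  · rw [if_pos h1, pow_one]
  · rw [if_neg h1]
    have hn : n = 0 := by
      simp only [Finset.mem_range, not_lt] at h1
      omega
    subst hn
    simpa using hg.symm

lemma comp_mul (hg : constantCoeff (R := ℚ) g = 0) (a b : PowerSeries ℚ) :
    comp (a * b) g = comp a g * comp b g := by
  ext n
  have step1 : PowerSeries.coeff (R := ℚ) n (comp (a * b) g) =
      PowerSeries.coeff (R := ℚ) n (Polynomial.aeval g (trunc (n + 1) a * trunc (n + 1) b)) := by
    rw [comp, coeff_mk, coeff_aeval' hg]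
    refine Finset.sum_congr rfl fun i hi => ?_
    congr 1
    have hi' : i < n + 1 := Finset.mem_range.mp hi
    rw [PowerSeries.coeff_mul_eq_coeff_trunc_mul_trunc a b hi', ← Polynomial.coe_mul,
      Polynomial.coeff_coe]
  rw [step1, map_mul, PowerSeries.coeff_mul, PowerSeries.coeff_mul]
  refine Finset.sum_congr rfl fun pq hpq => ?_
  rw [← coeff_comp' hg a (Finset.HasAntidiagonal.antidiagonal.fst_le hpq),
    ← coeff_comp' hg b (Finset.HasAntidiagonal.antidiagonal.snd_le hpq)]

lemma constCoeff_comp (f g : PowerSeries ℚ) :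
    constantCoeff (R := ℚ) (comp f g) = constantCoeff (R := ℚ) f := by
  rw [← PowerSeries.coeff_zero_eq_constantCoeff_apply,
    ← PowerSeries.coeff_zero_eq_constantCoeff_apply, comp, coeff_mk]
  simp

end CompLemmas

/-- For the Motzkin generating function `m = 1 + z·m + z²·m²` and
`m̃ = 1 + z·m`, we have `m̃ = 1 + z·(1 - m̃ + m̃²)`, and `h = z·m̃` is
pseudo-involutory with `B`-function the Catalan series `C`. -/
theorem motzkin_planted_B (m Cat : PowerSeries ℚ)
    (hm : m = 1 + X * m + X ^ 2 * m ^ 2)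
    (hCat : Cat = 1 + X * Cat ^ 2) :
    (1 + X * m) = 1 + X * (1 - (1 + X * m) + (1 + X * m) ^ 2) ∧
      PseudoInvolutory (X * (1 + X * m)) ∧
      (X * (1 + X * m)) - X =
        X * (X * (1 + X * m)) * comp Cat (X * (X * (1 + X * m))) := by
  have hgX : constantCoeff (R := ℚ) (-X : PowerSeries ℚ) = 0 := by simp
  have part1 : (1 + X * m) = 1 + X * (1 - (1 + X * m) + (1 + X * m) ^ 2) := by
    linear_combination (X : PowerSeries ℚ) * hm
  have hE0 : (X * (1 + X * m)) * (X * (1 + X * m)) + X + X * X =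
      (X * (1 + X * m)) + X * (X * (1 + X * m)) := by
    linear_combination (-(X : PowerSeries ℚ) ^ 2) * hm
  obtain ⟨h, hh⟩ : ∃ h : PowerSeries ℚ, X * (1 + X * m) = h := ⟨_, rfl⟩
  rw [hh] at hE0 ⊢
  have hch : constantCoeff (R := ℚ) h = 0 := by rw [← hh]; simp
  obtain ⟨u, hu⟩ : ∃ u : PowerSeries ℚ, comp h (-X) = u := ⟨_, rfl⟩
  have hcu : constantCoeff (R := ℚ) u = 0 := by rw [← hu, constCoeff_comp]; exact hch
  have hU : u * u + (-X) + (-X) * (-X) = u + (-X) * u := by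
    have h2 := congrArg (fun f => comp f (-X)) hE0
    simp only [comp_add, comp_mul hgX, comp_X hgX] at h2
    rw [hu] at h2
    exact h2
  refine ⟨part1, ⟨?_, ?_⟩, ?_⟩
  · -- comp h (-(comp h (-X))) = X
    rw [hu]
    have hcnu : constantCoeff (R := ℚ) (-u) = 0 := by rw [map_neg, hcu, neg_zero]
    obtain ⟨v, hv⟩ : ∃ v : PowerSeries ℚ, comp h (-u) = v := ⟨_, rfl⟩
    rw [hv]
    have hcv : constantCoeff (R := ℚ) v = 0 := by rw [← hv, constCoeff_comp]; exact hch
    have hV : v * v + (-u) + (-u) * (-u) = v + (-u) * v := by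
      have h2 := congrArg (fun f => comp f (-u)) hE0
      simp only [comp_add, comp_mul hcnu, comp_X hcnu] at h2
      rw [hv] at h2
      exact h2
    have hfact : (v - X) * (v + X - 1 + u) = 0 := by linear_combination hV - hU
    rcases mul_eq_zero.mp hfact with h1 | h2
    · linear_combination h1
    · exfalso
      have h3 := congrArg (constantCoeff (R := ℚ)) h2
      simp [hcv, hcu] at h3
  · -- comp (-(comp h (-X))) h = X
    rw [hu]
    have hK : (-u) * (-u) + (-u) + X * X = X * (-u) + X := by linear_combination hU
    have hW := congrArg (fun f => comp f h) hK
    simp only [comp_add, comp_mul hch, comp_X hch] at hW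
    obtain ⟨w, hw⟩ : ∃ w : PowerSeries ℚ, comp (-u) h = w := ⟨_, rfl⟩
    rw [hw] at hW ⊢
    have hcw : constantCoeff (R := ℚ) w = 0 := by
      rw [← hw, constCoeff_comp, map_neg, hcu, neg_zero]
    have hfact2 : (w - X) * (w + X + 1 - h) = 0 := by linear_combination hW - hE0
    rcases mul_eq_zero.mp hfact2 with h1 | h2
    · linear_combination h1
    · exfalso
      have h3 := congrArg (constantCoeff (R := ℚ)) h2
      simp [hcw, hch] at h3
  · -- h - X = X * h * comp Cat (X * h)
    have hgh : constantCoeff (R := ℚ) (X * h) = 0 := by simp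
    have hCat' : Cat = 1 + X * (Cat * Cat) := by linear_combination hCat
    have hD := congrArg (fun f => comp f (X * h)) hCat'
    simp only [comp_add, comp_mul hgh, comp_X hgh, comp_one] at hD
    obtain ⟨D, hD2⟩ : ∃ D : PowerSeries ℚ, comp Cat (X * h) = D := ⟨_, rfl⟩
    rw [hD2] at hD ⊢
    have hS : X * h * D = X * h + (X * h * D) * (X * h * D) := by
      linear_combination (X * h) * hD
    have hT : h - X = X * h + (h - X) * (h - X) := by linear_combination -hE0
    have hfact3 : ((h - X) - X * h * D) * (1 - (h - X) - X * h * D) = 0 := by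
      linear_combination hT - hS
    rcases mul_eq_zero.mp hfact3 with h1 | h2
    · linear_combination h1
    · exfalso
      have h3 := congrArg (constantCoeff (R := ℚ)) h2
      simp [hch] at h3
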